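/- Let p be an odd prime and d ≥ 1 an integer with p ∤ d. Let Q: 𝔽_p^{20} → 𝔽_p be the hyperbolic quadratic form Q(x) = x₁x₂ + x₃x₄ + ⋯ + x₁₉x₂₀. Then (p − 1)·#{λ ∈ 𝔽_p^{20} : 1 + 4dQ(λ) ≠ 0 and 1 + 4dQ(λ) is not a square in 𝔽_p} + #{λ ∈ 𝔽_p^{20} : Q(λ) ≠ 0 and d·Q(λ) is not a square in 𝔽_p} = (p − 1)·(p^{10}(p^{10} − 1)/2). -/

import Mathlib

open Finset

section aux

variable (p : ℕ) [Fact p.Prime]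

lemma aux_card_ne_zero :
    (univ.filter (fun t : ZMod p => t ≠ 0)).card = p - 1 := by
  rw [filter_ne', card_erase_of_mem (mem_univ 0), card_univ, ZMod.card]

lemma aux_card_pairs (b : ZMod p) :
    (univ.filter (fun y : ZMod p × ZMod p => y.1 * y.2 = b)).card
      = if b = 0 then 2 * p - 1 else p - 1 := by
  have hp1 : 1 ≤ p := (Fact.out : p.Prime).one_le
  split_ifs with hb
  · subst hb
    have hcompl : (univ.filter (fun y : ZMod p × ZMod p => ¬ y.1 * y.2 = 0)).card
        = (p - 1) * (p - 1) := by
      rw [Finset.filter_congr (fun y _ => by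
          simp [mul_eq_zero, not_or] : ∀ y ∈ (univ : Finset (ZMod p × ZMod p)),
            (¬ y.1 * y.2 = 0) ↔ (y.1 ≠ 0 ∧ y.2 ≠ 0)),
        ← Fintype.card_subtype,
        Fintype.card_congr (Equiv.subtypeProdEquivProd
          (p := fun t : ZMod p => t ≠ 0) (q := fun t : ZMod p => t ≠ 0)),
        Fintype.card_prod, Fintype.card_subtype, aux_card_ne_zero]
    have htot := Finset.card_filter_add_card_filter_not
      (s := (univ : Finset (ZMod p × ZMod p))) (p := fun y => y.1 * y.2 = 0)
    rw [hcompl, card_univ, Fintype.card_prod, ZMod.card] at htot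
    obtain ⟨m, rfl⟩ : ∃ m, p = m + 1 := ⟨p - 1, by omega⟩
    have e2 : (m + 1) - 1 = m := by omega
    have e1 : (m + 1) * (m + 1) = m * m + 2 * m + 1 := by ring
    rw [e2, e1] at htot
    omega
  · rw [← aux_card_ne_zero p]
    apply Finset.card_nbij' (i := fun y : ZMod p × ZMod p => y.1)
      (j := fun t : ZMod p => (t, b * t⁻¹)) (t := univ.filter (fun t : ZMod p => t ≠ 0))
    · intro y hy
      simp only [Finset.mem_coe, mem_filter, mem_univ, true_and] at hy ⊢
      intro h0; rw [h0, zero_mul] at hy; exact hb hy.symm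
    · intro t ht
      simp only [Finset.mem_coe, mem_filter, mem_univ, true_and] at ht ⊢
      field_simp
    · intro y hy
      simp only [Finset.mem_coe, mem_filter, mem_univ, true_and] at hy
      have h1 : y.1 ≠ 0 := by intro h0; rw [h0, zero_mul] at hy; exact hb hy.symm
      have : b * y.1⁻¹ = y.2 := by rw [← hy]; field_simp
      simp [this]
    · intro t ht; rfl

lemma arith_pos (q P : ℕ) (hq : 1 ≤ q) (hP : 1 ≤ P) :
    q * q * (q * (P * P) - P) + (2 * q - 1) * (q * P)
      = q * q * q * (P * P) + q * q * P - q * P := by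
  have h1 : P ≤ q * (P * P) := le_trans (Nat.le_mul_of_pos_left P (by omega))
    (Nat.le_mul_of_pos_left _ (by omega))
  have h2 : q * P ≤ q * q * q * (P * P) + q * q * P :=
    le_trans (Nat.mul_le_mul (Nat.le_mul_of_pos_left q (by positivity))
      (Nat.le_mul_of_pos_left P (by omega))) (Nat.le_add_right _ _)
  have h3 : 1 ≤ 2 * q := by omega
  zify [h1, h2, h3]
  ring

lemma arith_neg (q P : ℕ) (hq : 1 ≤ q) (hP : 1 ≤ P) :
    q * q * (q * (P * P) - P) + (q - 1) * (q * P)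
      = q * q * q * (P * P) - q * P := by
  have h1 : P ≤ q * (P * P) := le_trans (Nat.le_mul_of_pos_left P (by omega))
    (Nat.le_mul_of_pos_left _ (by omega))
  have h2 : q * P ≤ q * q * q * (P * P) :=
    Nat.mul_le_mul (Nat.le_mul_of_pos_left q (by positivity))
      (Nat.le_mul_of_pos_left P (by omega))
  zify [h1, h2, hq]
  ring

lemma aux_fiber (k : ℕ) (a : ZMod p) :
    Nat.card {x : Fin (k+1) → ZMod p × ZMod p // ∑ j, (x j).1 * (x j).2 = a}
      = if a = 0 then p^(2*k+1) + p^(k+1) - p^k else p^(2*k+1) - p^k := by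
  have hp1 : 1 ≤ p := (Fact.out : p.Prime).one_le
  induction k generalizing a with
  | zero =>
    have e : {x : Fin 1 → ZMod p × ZMod p // ∑ j, (x j).1 * (x j).2 = a}
        ≃ {y : ZMod p × ZMod p // y.1 * y.2 = a} :=
      (Equiv.funUnique (Fin 1) _).subtypeEquiv (fun x => by
        simp [Fin.sum_univ_one])
    rw [Nat.card_congr e, Nat.card_eq_fintype_card, Fintype.card_subtype, aux_card_pairs]
    split_ifs <;> simp <;> omega
  | succ k ih =>
    set M := ZMod p × ZMod p
    have e : {x : Fin (k+2) → M // ∑ j, (x j).1 * (x j).2 = a}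
        ≃ Σ y : M, {z : Fin (k+1) → M // ∑ j, (z j).1 * (z j).2 = a - y.1 * y.2} := by
      refine ((Fin.consEquiv (fun _ : Fin (k+2) => M)).symm.subtypeEquiv (fun x => ?_)).trans
        ((Equiv.subtypeProdEquivSigmaSubtype
          (fun (y : M) (z : Fin (k+1) → M) => ∑ j, (z j).1 * (z j).2 = a - y.1 * y.2)))
      rw [Fin.sum_univ_succ]
      constructor
      · intro h; dsimp only [Fin.consEquiv, Equiv.coe_fn_symm_mk, Fin.tail]; rw [eq_sub_iff_add_eq, add_comm]; exact h
      · intro h; dsimp only [Fin.consEquiv, Equiv.coe_fn_symm_mk, Fin.tail] at h; rw [eq_sub_iff_add_eq, add_comm] at h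
        exact h
    rw [Nat.card_congr e, Nat.card_eq_fintype_card, Fintype.card_sigma]
    have : ∀ y : M, Fintype.card {z : Fin (k+1) → M // ∑ j, (z j).1 * (z j).2 = a - y.1 * y.2}
        = (p^(2*k+1) - p^k) + (if y.1 * y.2 = a then p^(k+1) else 0) := by
      intro y
      rw [← Nat.card_eq_fintype_card, ih]
      have hk : p^k ≤ p^(2*k+1) := Nat.pow_le_pow_right hp1 (by omega)
      have hco : (a - y.1 * y.2 = 0) ↔ (y.1 * y.2 = a) := by
        rw [sub_eq_zero, eq_comm]
      rw [if_congr hco rfl rfl]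
      split_ifs <;> omega
    rw [Finset.sum_congr rfl (fun y _ => this y)]
    rw [Finset.sum_add_distrib, Finset.sum_const, ← Finset.sum_filter, Finset.sum_const,
      aux_card_pairs, card_univ, Fintype.card_prod, ZMod.card]
    have hP1 : 1 ≤ p ^ k := Nat.one_le_pow _ _ (by omega)
    have h1 : p ^ (2*(k+1)+1) = p^3 * (p^k * p^k) := by
      rw [show 2*(k+1)+1 = 3 + (k + k) by ring, pow_add, pow_add]
    have h2 : p ^ (2*k+1) = p * (p^k * p^k) := by
      rw [show 2*k+1 = 1 + (k + k) by ring, pow_add, pow_add, pow_one]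
    have h3 : p ^ (k+1+1) = p^2 * p^k := by rw [show k+1+1 = 2+k by ring, pow_add]
    have h4 : p ^ (k+1) = p * p^k := by rw [pow_succ, mul_comm]
    have hp3 : p^3 = p*p*p := by ring
    have hp2 : p^2 = p*p := by ring
    set P := p^k with hP
    rw [smul_eq_mul, h1, h2, h3, h4, hp3, hp2]
    split_ifs with ha
    · exact arith_pos p P hp1 hP1
    · exact arith_neg p P hp1 hP1

lemma aux_card_nonsquare (hp2 : p % 2 = 1) :
    (univ.filter (fun a : ZMod p => ¬ IsSquare a)).card = (p - 1) / 2 := by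
  have hF : ringChar (ZMod p) ≠ 2 := by
    rw [ZMod.ringChar_zmod_n]; omega
  have h0B : (0 : ZMod p) ∈ univ.filter (fun a : ZMod p => IsSquare a) := by
    simp [IsSquare.zero]
  have hsum := quadraticChar_sum_zero hF
  rw [← Finset.sum_filter_add_sum_filter_not univ (fun a : ZMod p => IsSquare a)] at hsum
  have hBsum : ∑ a ∈ univ.filter (fun a : ZMod p => IsSquare a), quadraticChar (ZMod p) a
      = ((univ.filter (fun a : ZMod p => IsSquare a)).card : ℤ) - 1 := by
    have hval : ∀ a ∈ univ.filter (fun a : ZMod p => IsSquare a),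
        quadraticChar (ZMod p) a = if a = 0 then 0 else 1 := by
      intro a ha
      simp only [mem_filter, mem_univ, true_and] at ha
      split_ifs with h
      · rw [h]; exact quadraticChar_zero
      · exact (quadraticChar_one_iff_isSquare h).mpr ha
    rw [Finset.sum_congr rfl hval, Finset.sum_ite, Finset.sum_const, Finset.sum_const,
      smul_zero, zero_add, filter_ne', card_erase_of_mem h0B, nsmul_eq_mul, mul_one]
    have : 1 ≤ (univ.filter (fun a : ZMod p => IsSquare a)).card :=
      Finset.card_pos.mpr ⟨0, h0B⟩
    push_cast [Nat.cast_sub this]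
    ring
  have hAsum : ∑ a ∈ univ.filter (fun a : ZMod p => ¬ IsSquare a), quadraticChar (ZMod p) a
      = -(((univ.filter (fun a : ZMod p => ¬ IsSquare a)).card : ℤ)) := by
    have hval : ∀ a ∈ univ.filter (fun a : ZMod p => ¬ IsSquare a),
        quadraticChar (ZMod p) a = -1 := by
      intro a ha
      simp only [mem_filter, mem_univ, true_and] at ha
      exact quadraticChar_neg_one_iff_not_isSquare.mpr ha
    rw [Finset.sum_congr rfl hval, Finset.sum_const, nsmul_eq_mul, mul_neg_one]
  rw [hBsum, hAsum] at hsum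
  have htot := Finset.card_filter_add_card_filter_not
    (s := (univ : Finset (ZMod p))) (p := fun a : ZMod p => IsSquare a)
  rw [card_univ, ZMod.card] at htot
  omega

lemma aux_card_S2 (hp2 : p % 2 = 1) (c : ZMod p) (hc : c ≠ 0) :
    (univ.filter (fun a : ZMod p => a ≠ 0 ∧ ¬ ∃ t : ZMod p, c * a = t ^ 2)).card
      = (p - 1) / 2 := by
  rw [← aux_card_nonsquare p hp2]
  apply Finset.card_nbij' (i := fun a : ZMod p => c * a) (j := fun b : ZMod p => c⁻¹ * b)
  · intro a ha
    simp only [Finset.mem_coe, mem_filter, mem_univ, true_and] at ha ⊢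
    rw [isSquare_iff_exists_sq]
    exact ha.2
  · intro b hb
    simp only [Finset.mem_coe, mem_filter, mem_univ, true_and] at hb ⊢
    have hcc : c * (c⁻¹ * b) = b := by field_simp
    constructor
    · intro h0
      apply hb
      rw [← hcc, h0, mul_zero]
      exact IsSquare.zero
    · intro ⟨t, ht⟩
      apply hb
      rw [isSquare_iff_exists_sq]
      exact ⟨t, by rw [← hcc]; exact ht⟩
  · intro a ha
    field_simp
  · intro b hb
    field_simp

lemma aux_card_S1 (hp2 : p % 2 = 1) (c : ZMod p) (hc : c ≠ 0) :
    (univ.filter (fun a : ZMod p => 1 + c * a ≠ 0 ∧ ¬ ∃ t : ZMod p, 1 + c * a = t ^ 2)).card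
      = (p - 1) / 2 := by
  rw [← aux_card_nonsquare p hp2]
  apply Finset.card_nbij' (i := fun a : ZMod p => 1 + c * a)
    (j := fun b : ZMod p => c⁻¹ * (b - 1))
  · intro a ha
    simp only [Finset.mem_coe, mem_filter, mem_univ, true_and] at ha ⊢
    rw [isSquare_iff_exists_sq]
    exact ha.2
  · intro b hb
    simp only [Finset.mem_coe, mem_filter, mem_univ, true_and] at hb ⊢
    have hcc : 1 + c * (c⁻¹ * (b - 1)) = b := by field_simp; ring
    rw [hcc]
    refine ⟨fun h0 => hb ?_, fun h => hb (by rw [isSquare_iff_exists_sq]; exact h)⟩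
    rw [h0]
    exact IsSquare.zero
  · intro a ha
    field_simp
    ring
  · intro b hb
    field_simp
    ring

def pairE : (Fin 20 → ZMod p) ≃ (Fin 10 → ZMod p × ZMod p) where
  toFun l j := (l ⟨2 * j.val, by have := j.isLt; omega⟩,
                l ⟨2 * j.val + 1, by have := j.isLt; omega⟩)
  invFun x k :=
    if h : k.val % 2 = 0 then (x ⟨k.val / 2, by have := k.isLt; omega⟩).1
    else (x ⟨k.val / 2, by have := k.isLt; omega⟩).2
  left_inv l := by
    funext k
    have hk := k.isLt
    dsimp only
    by_cases h : k.val % 2 = 0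
    · rw [dif_pos h]
      exact congrArg l (Fin.ext (by simp only [Fin.val_mk]; omega))
    · rw [dif_neg h]
      exact congrArg l (Fin.ext (by simp only [Fin.val_mk]; omega))
  right_inv x := by
    funext j
    have hj := j.isLt
    dsimp only
    rw [dif_pos (by omega), dif_neg (show ¬(2 * j.val + 1) % 2 = 0 by omega)]
    have e1 : 2 * j.val / 2 = j.val := by omega
    have e2 : (2 * j.val + 1) / 2 = j.val := by omega
    simp only [e1, e2, Fin.eta]

lemma aux_Qfiber (Q : (Fin 20 → ZMod p) → ZMod p)
    (hQ : ∀ x, Q x = ∑ j : Fin 10,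
      x ⟨2 * j.val, by have := j.isLt; omega⟩ * x ⟨2 * j.val + 1, by have := j.isLt; omega⟩)
    (a : ZMod p) (ha : a ≠ 0) :
    (univ.filter (fun l : Fin 20 → ZMod p => Q l = a)).card = p ^ 19 - p ^ 9 := by
  rw [← Fintype.card_subtype]
  have e : {l : Fin 20 → ZMod p // Q l = a}
      ≃ {x : Fin 10 → ZMod p × ZMod p // ∑ j, (x j).1 * (x j).2 = a} := by
    refine (pairE p).subtypeEquiv (fun l => ?_)
    rw [hQ l]
    rfl
  rw [← Nat.card_eq_fintype_card, Nat.card_congr e]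
  have := aux_fiber p 9 a
  rw [if_neg ha] at this
  norm_num at this ⊢
  exact this

lemma aux_count (P : ZMod p → Prop) [DecidablePred P] (hP0 : ¬ P 0)
    (Q : (Fin 20 → ZMod p) → ZMod p)
    (hQ : ∀ x, Q x = ∑ j : Fin 10,
      x ⟨2 * j.val, by have := j.isLt; omega⟩ * x ⟨2 * j.val + 1, by have := j.isLt; omega⟩) :
    Nat.card {l : Fin 20 → ZMod p // P (Q l)}
      = (univ.filter P).card * (p ^ 19 - p ^ 9) := by
  rw [Nat.card_eq_fintype_card, Fintype.card_subtype]
  rw [Finset.card_eq_sum_card_fiberwise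
    (f := Q) (t := univ.filter P) (fun l hl => by
      simp only [Finset.mem_coe, mem_filter, mem_univ, true_and] at hl ⊢; exact hl)]
  rw [Finset.sum_congr rfl (fun a ha => ?_), Finset.sum_const, smul_eq_mul]
  simp only [mem_filter, mem_univ, true_and] at ha
  have hfe : (univ.filter (fun l : Fin 20 → ZMod p => P (Q l))).filter
      (fun l => Q l = a) = univ.filter (fun l => Q l = a) := by
    ext l
    simp only [mem_filter, mem_univ, true_and]
    exact ⟨fun h => h.2, fun h => ⟨by rw [h]; exact ha, h⟩⟩
  rw [hfe, aux_Qfiber p Q hQ a (fun h0 => hP0 (h0 ▸ ha))]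

end aux

/-- Let `p` be an odd prime and `d ≥ 1` with `p ∤ d`, and let `Q` be the
hyperbolic quadratic form on `𝔽_p^{20}`.  Then
`(p−1)·#{λ : 1 + 4dQ(λ) a nonzero nonsquare} + #{λ : Q(λ) ≠ 0 and dQ(λ) a nonsquare}
  = (p−1)·(p¹⁰(p¹⁰−1)/2)`. -/
theorem count_nonsquare_class_lattices (p : ℕ) (hp : p.Prime) (hodd : Odd p)
    (d : ℕ) (hd : 1 ≤ d) (hpd : ¬ p ∣ d)
    (Q : (Fin 20 → ZMod p) → ZMod p)
    (hQ : ∀ x, Q x = ∑ j : Fin 10,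
      x ⟨2 * j.val, by have := j.isLt; omega⟩ * x ⟨2 * j.val + 1, by have := j.isLt; omega⟩) :
    (p - 1) * Nat.card {l : Fin 20 → ZMod p //
        1 + 4 * (d : ZMod p) * Q l ≠ 0 ∧ ¬ ∃ t : ZMod p, 1 + 4 * (d : ZMod p) * Q l = t ^ 2}
      + Nat.card {l : Fin 20 → ZMod p //
          Q l ≠ 0 ∧ ¬ ∃ t : ZMod p, (d : ZMod p) * Q l = t ^ 2}
      = (p - 1) * (p ^ 10 * (p ^ 10 - 1) / 2) := by
  haveI : Fact p.Prime := ⟨hp⟩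
  have hp2 : p % 2 = 1 := Nat.odd_iff.mp hodd
  have hp1 : 1 ≤ p := hp.one_le
  have hd0 : (d : ZMod p) ≠ 0 := by
    intro h
    exact hpd ((ZMod.natCast_eq_zero_iff d p).mp h)
  have h40 : (4 : ZMod p) ≠ 0 := by
    have h4 : ((4 : ℕ) : ZMod p) = (4 : ZMod p) := by push_cast; rfl
    rw [← h4]
    intro h
    have hdvd : p ∣ 4 := (ZMod.natCast_eq_zero_iff 4 p).mp h
    have h22 : (4:ℕ) = 2 ^ 2 := by norm_num
    have : p ∣ 2 := hp.dvd_of_dvd_pow (h22 ▸ hdvd)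
    have := Nat.le_of_dvd (by norm_num) this
    have h2le := hp.two_le
    omega
  have hc : 4 * (d : ZMod p) ≠ 0 := mul_ne_zero h40 hd0
  -- the two counts
  have hP1 : ¬ ((1 : ZMod p) + 4 * (d : ZMod p) * 0 ≠ 0 ∧
      ¬ ∃ t : ZMod p, 1 + 4 * (d : ZMod p) * 0 = t ^ 2) := by
    intro ⟨_, h⟩
    exact h ⟨1, by ring⟩
  have hP2 : ¬ ((0 : ZMod p) ≠ 0 ∧ ¬ ∃ t : ZMod p, (d : ZMod p) * 0 = t ^ 2) := by
    intro ⟨h, _⟩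
    exact h rfl
  classical
  have e1 : Nat.card {l : Fin 20 → ZMod p //
        1 + 4 * (d : ZMod p) * Q l ≠ 0 ∧ ¬ ∃ t : ZMod p, 1 + 4 * (d : ZMod p) * Q l = t ^ 2}
      = (univ.filter (fun a : ZMod p =>
          1 + 4 * (d : ZMod p) * a ≠ 0 ∧ ¬ ∃ t : ZMod p, 1 + 4 * (d : ZMod p) * a = t ^ 2)).card
        * (p ^ 19 - p ^ 9) :=
    aux_count p (fun a : ZMod p =>
      1 + 4 * (d : ZMod p) * a ≠ 0 ∧ ¬ ∃ t : ZMod p, 1 + 4 * (d : ZMod p) * a = t ^ 2)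
      hP1 Q hQ
  have e2 : Nat.card {l : Fin 20 → ZMod p //
        Q l ≠ 0 ∧ ¬ ∃ t : ZMod p, (d : ZMod p) * Q l = t ^ 2}
      = (univ.filter (fun a : ZMod p =>
          a ≠ 0 ∧ ¬ ∃ t : ZMod p, (d : ZMod p) * a = t ^ 2)).card * (p ^ 19 - p ^ 9) :=
    aux_count p (fun a : ZMod p => a ≠ 0 ∧ ¬ ∃ t : ZMod p, (d : ZMod p) * a = t ^ 2) hP2 Q hQ
  rw [e1, e2, aux_card_S1 p hp2 (4 * (d : ZMod p)) hc, aux_card_S2 p hp2 ((d : ZMod p)) hd0]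
  -- arithmetic
  set e := (p - 1) / 2 with he
  set C := p ^ 19 - p ^ 9 with hC
  have hCkey : p * C = p ^ 10 * (p ^ 10 - 1) := by
    have h9 : p ^ 9 ≤ p ^ 19 := Nat.pow_le_pow_right hp1 (by omega)
    have h10 : 1 ≤ p ^ 10 := Nat.one_le_pow _ _ (by omega)
    rw [hC]
    zify [h9, h10]
    ring
  have hX2 : 2 ∣ p ^ 10 * (p ^ 10 - 1) := by
    have : p ^ 10 % 2 = 1 := Nat.odd_iff.mp (hodd.pow)
    exact Dvd.dvd.mul_left (by omega) _
  have hkey : (p - 1) * (e * C) + e * C = e * (p * C) := by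
    have hsub : p - 1 + 1 = p := by omega
    calc (p - 1) * (e * C) + e * C = ((p - 1) + 1) * (e * C) := by ring
      _ = p * (e * C) := by rw [hsub]
      _ = e * (p * C) := by ring
  rw [hkey, hCkey]
  have h2e : p - 1 = 2 * e := by omega
  rw [h2e]
  have : 2 * e * (p ^ 10 * (p ^ 10 - 1) / 2) = e * (2 * (p ^ 10 * (p ^ 10 - 1) / 2)) := by ring
  rw [this, Nat.mul_div_cancel' hX2]
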